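/- arXiv:2505.16629 — 9 statements merged into one kernel-verified Lean document; each statement's English description precedes it below -/
import Mathlib

section
/- Let f be a positive integer and let α, β, γ be real numbers with α + β + γ = (1 + 4/f)·π. Suppose at least one of α/π, β/π, γ/π is irrational, and suppose (m₁,m₂,m₃) and (n₁,n₂,n₃) are triples of natural numbers satisfying m₁·α + m₂·β + m₃·γ = 2π and n₁·α + n₂·β + n₃·γ = 2π. Then the determinant of the 3×3 real matrix with rows (1,1,1), (m₁,m₂,m₃), (n₁,n₂,n₃) is zero. -/
/-- Determinant form of the Irrational Angle Lemma. -/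
theorem irrational_angle_lemma_det (f : ℕ) (hf : 0 < f) (α β γ : ℝ)
    (hsum : α + β + γ = (1 + 4 / (f : ℝ)) * Real.pi)
    (hirr : Irrational (α / Real.pi) ∨ Irrational (β / Real.pi) ∨ Irrational (γ / Real.pi))
    (m₁ m₂ m₃ n₁ n₂ n₃ : ℕ)
    (hm : (m₁ : ℝ) * α + (m₂ : ℝ) * β + (m₃ : ℝ) * γ = 2 * Real.pi)
    (hn : (n₁ : ℝ) * α + (n₂ : ℝ) * β + (n₃ : ℝ) * γ = 2 * Real.pi) :
    Matrix.det !![(1 : ℝ), 1, 1; (m₁ : ℝ), (m₂ : ℝ), (m₃ : ℝ); (n₁ : ℝ), (n₂ : ℝ), (n₃ : ℝ)] = 0 := by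
  by_contra hdet
  have πne : Real.pi ≠ 0 := Real.pi_ne_zero
  have hfne : (f : ℝ) ≠ 0 := Nat.cast_ne_zero.mpr hf.ne'
  set Mq : Matrix (Fin 3) (Fin 3) ℚ :=
    !![1, 1, 1; (m₁ : ℚ), (m₂ : ℚ), (m₃ : ℚ); (n₁ : ℚ), (n₂ : ℚ), (n₃ : ℚ)] with hMq
  set M : Matrix (Fin 3) (Fin 3) ℝ :=
    !![(1 : ℝ), 1, 1; (m₁ : ℝ), (m₂ : ℝ), (m₃ : ℝ); (n₁ : ℝ), (n₂ : ℝ), (n₃ : ℝ)] with hM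
  have hmap : Mq.map ⇑(Rat.castHom ℝ) = M := by
    ext i j
    fin_cases i <;> fin_cases j <;> simp [hMq, hM]
  have hcastdet : ((Mq.det : ℚ) : ℝ) = M.det := by
    rw [show ((Mq.det : ℚ) : ℝ) = (Rat.castHom ℝ) Mq.det from rfl, RingHom.map_det,
      RingHom.mapMatrix_apply, hmap]
  have hdq : Mq.det ≠ 0 := by
    intro h
    apply hdet
    rw [← hcastdet, h, Rat.cast_zero]
  have hdqu : IsUnit Mq.det := isUnit_iff_ne_zero.mpr hdq
  set x : Fin 3 → ℝ := ![α / Real.pi, β / Real.pi, γ / Real.pi] with hx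
  set vq : Fin 3 → ℚ := ![1 + 4 / (f : ℚ), 2, 2] with hvq
  have hfq : (f : ℚ) ≠ 0 := Nat.cast_ne_zero.mpr hf.ne'
  have h1 : α / Real.pi + β / Real.pi + γ / Real.pi = 1 + 4 / (f : ℝ) := by
    have h := hsum
    field_simp at h ⊢
    linarith [h]
  have h2 : (m₁ : ℝ) * (α / Real.pi) + (m₂ : ℝ) * (β / Real.pi) + (m₃ : ℝ) * (γ / Real.pi) = 2 := by
    field_simp
    linarith [hm]
  have h3 : (n₁ : ℝ) * (α / Real.pi) + (n₂ : ℝ) * (β / Real.pi) + (n₃ : ℝ) * (γ / Real.pi) = 2 := by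
    field_simp
    linarith [hn]
  have hMx : M.mulVec x = fun i => ((vq i : ℚ) : ℝ) := by
    ext i
    fin_cases i <;>
      simp [hM, hx, hvq, Matrix.mulVec, dotProduct, Fin.sum_univ_three] <;>
      linarith [h1, h2, h3]
  have hinv : (Mq⁻¹.map ⇑(Rat.castHom ℝ)) * M = 1 := by
    rw [← hmap, ← Matrix.map_mul, Matrix.nonsing_inv_mul Mq hdqu, Matrix.map_one]
    · exact map_zero _
    · exact map_one _
  set q : Fin 3 → ℚ := Mq⁻¹.mulVec vq with hq
  have hxq : x = fun i => ((q i : ℚ) : ℝ) := by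
    have : x = (Mq⁻¹.map ⇑(Rat.castHom ℝ)).mulVec (M.mulVec x) := by
      rw [Matrix.mulVec_mulVec, hinv, Matrix.one_mulVec]
    rw [hMx] at this
    rw [this]
    ext i
    simp [hq, Matrix.mulVec, dotProduct, Fin.sum_univ_three]
  have hα : α / Real.pi = ((q 0 : ℚ) : ℝ) := by
    have := congrFun hxq 0; simpa [hx] using this
  have hβ : β / Real.pi = ((q 1 : ℚ) : ℝ) := by
    have := congrFun hxq 1; simpa [hx] using this
  have hγ : γ / Real.pi = ((q 2 : ℚ) : ℝ) := by
    have := congrFun hxq 2; simpa [hx] using this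
  rcases hirr with h | h | h
  · exact (h.ne_rat (q 0)) hα
  · exact (h.ne_rat (q 1)) hβ
  · exact (h.ne_rat (q 2)) hγ
end

section
/- Let f be a positive integer and let α, β, γ be real numbers with α + β + γ = (1 + 4/f)·π. Suppose at least one of α/π, β/π, γ/π is irrational, and suppose (m₁,m₂,m₃) and (n₁,n₂,n₃) are triples of natural numbers satisfying m₁·α + m₂·β + m₃·γ = 2π and n₁·α + n₂·β + n₃·γ = 2π, where not all of m₁, m₂, m₃ are equal. Then there exists a real number t such that nᵢ = (1 − t)·mᵢ + t·(2f/(f+4)) for i = 1, 2, 3; that is, (n₁,n₂,n₃) lies on the real line through the points (m₁,m₂,m₃) and (2f/(f+4))·(1,1,1). -/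
/-- Line form of the Irrational Angle Lemma. -/
theorem irrational_angle_lemma_line (f : ℕ) (hf : 0 < f) (α β γ : ℝ)
    (hsum : α + β + γ = (1 + 4 / (f : ℝ)) * Real.pi)
    (hirr : Irrational (α / Real.pi) ∨ Irrational (β / Real.pi) ∨ Irrational (γ / Real.pi))
    (m₁ m₂ m₃ n₁ n₂ n₃ : ℕ)
    (hm : (m₁ : ℝ) * α + (m₂ : ℝ) * β + (m₃ : ℝ) * γ = 2 * Real.pi)
    (hn : (n₁ : ℝ) * α + (n₂ : ℝ) * β + (n₃ : ℝ) * γ = 2 * Real.pi)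
    (hne : ¬ (m₁ = m₂ ∧ m₂ = m₃)) :
    ∃ t : ℝ,
      (n₁ : ℝ) = (1 - t) * (m₁ : ℝ) + t * (2 * (f : ℝ) / ((f : ℝ) + 4)) ∧
      (n₂ : ℝ) = (1 - t) * (m₂ : ℝ) + t * (2 * (f : ℝ) / ((f : ℝ) + 4)) ∧
      (n₃ : ℝ) = (1 - t) * (m₃ : ℝ) + t * (2 * (f : ℝ) / ((f : ℝ) + 4)) := by
  have hπ : Real.pi ≠ 0 := Real.pi_ne_zero
  have hfR : (f : ℝ) ≠ 0 := Nat.cast_ne_zero.2 hf.ne'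
  have hfR0 : (0:ℝ) < (f:ℝ) := Nat.cast_pos.2 hf
  have hf4 : (f : ℝ) + 4 ≠ 0 := by positivity
  set c : ℝ := 2 * (f : ℝ) / ((f : ℝ) + 4) with hc
  set a₁ : ℝ := (n₁ : ℝ) - m₁ with ha₁
  set a₂ : ℝ := (n₂ : ℝ) - m₂ with ha₂
  set a₃ : ℝ := (n₃ : ℝ) - m₃ with ha₃
  set b₁ : ℝ := c - m₁ with hb₁
  set b₂ : ℝ := c - m₂ with hb₂
  set b₃ : ℝ := c - m₃ with hb₃
  set p : ℝ := a₂ * b₃ - a₃ * b₂ with hp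
  set q : ℝ := a₃ * b₁ - a₁ * b₃ with hq
  set r : ℝ := a₁ * b₂ - a₂ * b₁ with hr
  have ha : a₁ * α + a₂ * β + a₃ * γ = 0 := by
    rw [ha₁, ha₂, ha₃]; linear_combination hn - hm
  have hb : b₁ * α + b₂ * β + b₃ * γ = 0 := by
    rw [hb₁, hb₂, hb₃, hc]
    have : 2 * (f : ℝ) / ((f : ℝ) + 4) * (α + β + γ) = 2 * Real.pi := by
      rw [hsum]; field_simp
    linear_combination this - hm
  -- from the two relations: pβ = qα, pγ = rα, qγ = rβ
  have h1 : p * β = q * α := by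
    rw [hp, hq]; linear_combination b₃ * ha - a₃ * hb
  have h2 : p * γ = r * α := by
    rw [hp, hr]; linear_combination a₂ * hb - b₂ * ha
  have h3 : q * γ = r * β := by
    rw [hq, hr]; linear_combination b₁ * ha - a₁ * hb
  have hS : (0:ℝ) < 1 + 4 / (f:ℝ) := by positivity
  have hα : α * (p + q + r) = p * ((1 + 4 / (f:ℝ)) * Real.pi) := by
    linear_combination p * hsum - h1 - h2
  have hβ : β * (p + q + r) = q * ((1 + 4 / (f:ℝ)) * Real.pi) := by
    linear_combination q * hsum + h1 - h3
  have hγ : γ * (p + q + r) = r * ((1 + 4 / (f:ℝ)) * Real.pi) := by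
    linear_combination r * hsum + h2 + h3
  by_cases hpqr : p + q + r = 0
  · -- then p = q = r = 0, so a is parallel to b
    have hSπ : (1 + 4 / (f:ℝ)) * Real.pi ≠ 0 := by positivity
    have hp0 : p = 0 := by
      have := hα; rw [hpqr, mul_zero] at this
      exact (mul_eq_zero.1 this.symm).resolve_right hSπ
    have hq0 : q = 0 := by
      have := hβ; rw [hpqr, mul_zero] at this
      exact (mul_eq_zero.1 this.symm).resolve_right hSπ
    have hr0 : r = 0 := by
      have := hγ; rw [hpqr, mul_zero] at this
      exact (mul_eq_zero.1 this.symm).resolve_right hSπ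
    have hpqr' : a₂ * b₃ = a₃ * b₂ ∧ a₃ * b₁ = a₁ * b₃ ∧ a₁ * b₂ = a₂ * b₁ := by
      refine ⟨by linear_combination hp0 - hp, by linear_combination hq0 - hq,
        by linear_combination hr0 - hr⟩
    obtain ⟨e1, e2, e3⟩ := hpqr'
    -- some bᵢ ≠ 0
    have hbne : b₁ ≠ 0 ∨ b₂ ≠ 0 ∨ b₃ ≠ 0 := by
      by_contra h
      push_neg at h
      obtain ⟨z1, z2, z3⟩ := h
      apply hne
      have e12 : (m₁ : ℝ) = m₂ := by
        have : c - (m₁:ℝ) = c - m₂ := by rw [← hb₁, ← hb₂, z1, z2]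
        linarith
      have e23 : (m₂ : ℝ) = m₃ := by
        have : c - (m₂:ℝ) = c - m₃ := by rw [← hb₂, ← hb₃, z2, z3]
        linarith
      exact ⟨Nat.cast_injective e12, Nat.cast_injective e23⟩
    have step : ∀ (ai bi : ℝ) (mi ni : ℕ) (aj bj : ℝ), bj ≠ 0 → ai = (ni:ℝ) - mi →
        bi = c - mi → ai * bj = aj * bi → (ni : ℝ) = (1 - aj / bj) * mi + (aj / bj) * c := by
      intro ai bi mi ni aj bj hbj hai hbi hcross
      field_simp
      linear_combination -bj * hai + hcross + aj * hbi
    rcases hbne with hb0 | hb0 | hb0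
    · exact ⟨a₁ / b₁, step a₁ b₁ m₁ n₁ a₁ b₁ hb0 ha₁ hb₁ (by ring),
        step a₂ b₂ m₂ n₂ a₁ b₁ hb0 ha₂ hb₂ (by linarith [e3]),
        step a₃ b₃ m₃ n₃ a₁ b₁ hb0 ha₃ hb₃ (by linarith [e2])⟩
    · exact ⟨a₂ / b₂, step a₁ b₁ m₁ n₁ a₂ b₂ hb0 ha₁ hb₁ (by linarith [e3]),
        step a₂ b₂ m₂ n₂ a₂ b₂ hb0 ha₂ hb₂ (by ring),
        step a₃ b₃ m₃ n₃ a₂ b₂ hb0 ha₃ hb₃ (by linarith [e1])⟩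
    · exact ⟨a₃ / b₃, step a₁ b₁ m₁ n₁ a₃ b₃ hb0 ha₁ hb₁ (by linarith [e2]),
        step a₂ b₂ m₂ n₂ a₃ b₃ hb0 ha₂ hb₂ (by linarith [e1]),
        step a₃ b₃ m₃ n₃ a₃ b₃ hb0 ha₃ hb₃ (by ring)⟩
  · -- p + q + r ≠ 0 : all of α/π etc are rational, contradiction
    exfalso
    -- rational versions
    set A₁ : ℚ := (n₁ : ℚ) - m₁ with hA₁
    set A₂ : ℚ := (n₂ : ℚ) - m₂ with hA₂
    set A₃ : ℚ := (n₃ : ℚ) - m₃ with hA₃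
    set C : ℚ := 2 * (f : ℚ) / ((f : ℚ) + 4) with hC
    set B₁ : ℚ := C - m₁ with hB₁
    set B₂ : ℚ := C - m₂ with hB₂
    set B₃ : ℚ := C - m₃ with hB₃
    set P : ℚ := A₂ * B₃ - A₃ * B₂ with hP
    set Q : ℚ := A₃ * B₁ - A₁ * B₃ with hQ
    set R : ℚ := A₁ * B₂ - A₂ * B₁ with hR
    set S : ℚ := 1 + 4 / (f : ℚ) with hSq
    have hCc : (C : ℝ) = c := by rw [hC, hc]; push_cast; ring
    have hA₁c : (A₁ : ℝ) = a₁ := by rw [hA₁, ha₁]; push_cast; ring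
    have hA₂c : (A₂ : ℝ) = a₂ := by rw [hA₂, ha₂]; push_cast; ring
    have hA₃c : (A₃ : ℝ) = a₃ := by rw [hA₃, ha₃]; push_cast; ring
    have hB₁c : (B₁ : ℝ) = b₁ := by rw [hB₁, hb₁]; push_cast [hCc]; ring
    have hB₂c : (B₂ : ℝ) = b₂ := by rw [hB₂, hb₂]; push_cast [hCc]; ring
    have hB₃c : (B₃ : ℝ) = b₃ := by rw [hB₃, hb₃]; push_cast [hCc]; ring
    have hPc : (P : ℝ) = p := by rw [hP, hp]; push_cast [hA₂c, hA₃c, hB₂c, hB₃c]; ring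
    have hQc : (Q : ℝ) = q := by rw [hQ, hq]; push_cast [hA₁c, hA₃c, hB₁c, hB₃c]; ring
    have hRc : (R : ℝ) = r := by rw [hR, hr]; push_cast [hA₁c, hA₂c, hB₁c, hB₂c]; ring
    have hSc : (S : ℝ) = 1 + 4 / (f : ℝ) := by rw [hSq]; push_cast; ring
    have hPQR : (((P + Q + R) : ℚ) : ℝ) ≠ 0 := by
      push_cast [hPc, hQc, hRc]; exact hpqr
    have hPQRq : P + Q + R ≠ 0 := fun h => hPQR (by rw [h]; norm_num)
    have hrat : ∀ (x : ℝ) (X : ℚ), x * (p + q + r) = (X:ℝ) * ((1 + 4 / (f:ℝ)) * Real.pi) →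
        ¬ Irrational (x / Real.pi) := by
      intro x X hx hirrx
      have hx' : x * (((P + Q + R) : ℚ) : ℝ) = (((X * S) : ℚ) : ℝ) * Real.pi := by
        push_cast [hPc, hQc, hRc, hSc]
        linear_combination hx
      refine hirrx ⟨X * S / (P + Q + R), ?_⟩
      rw [Rat.cast_div, div_eq_div_iff hPQR hπ]
      exact hx'.symm
    rcases hirr with h | h | h
    · exact hrat α P (by rw [hPc]; exact hα) h
    · exact hrat β Q (by rw [hQc]; exact hβ) h
    · exact hrat γ R (by rw [hRc]; exact hγ) h
end

section
/- Let A, B, C be linearly independent unit vectors in ℝ³ (EuclideanSpace ℝ (Fin 3)), and let a = ∠(B,C), b = ∠(A,C), c = ∠(A,B) be the angles between the corresponding vectors. Then 0 < a < π, 0 < b < π, 0 < c < π, and the strict triangle inequalities a + b > c, b + c > a, a + c > b hold. -/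
open InnerProductGeometry Real
open scoped RealInnerProductSpace

variable {V : Type*} [NormedAddCommGroup V] [InnerProductSpace ℝ V]

lemma aux_angle_mem (x y : V) (h : LinearIndependent ℝ ![x, y]) :
    0 < angle x y ∧ angle x y < π := by
  rw [linearIndependent_fin2] at h
  obtain ⟨hy, hxy⟩ := h
  constructor
  · rcases lt_or_eq_of_le (angle_nonneg x y) with h0 | h0
    · exact h0
    · exfalso
      obtain ⟨hx, r, hr, hyx⟩ := angle_eq_zero_iff.mp h0.symm
      exact hxy r⁻¹ (by simp [hyx, smul_smul, inv_mul_cancel₀ hr.ne'])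
  · rcases lt_or_eq_of_le (angle_le_pi x y) with h0 | h0
    · exact h0
    · exfalso
      obtain ⟨hx, r, hr, hyx⟩ := angle_eq_pi_iff.mp h0
      exact hxy r⁻¹ (by simp [hyx, smul_smul, inv_mul_cancel₀ hr.ne])

lemma aux_angle_lt (A B C : V) (hind : LinearIndependent ℝ ![A, B, C])
    (hA : ‖A‖ = 1) (hB : ‖B‖ = 1) (hC : ‖C‖ = 1) :
    angle A B < angle B C + angle A C := by
  set a := angle B C with ha
  set b := angle A C with hb
  set c := angle A B with hc
  by_cases hπ : a + b ≤ π
  · -- independence of pairs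
    have hAC : LinearIndependent ℝ ![A, C] := by
      have h2 : ![A, C] = ![A, B, C] ∘ (![0, 2] : Fin 2 → Fin 3) := by
        ext i; fin_cases i <;> rfl
      rw [h2]; exact hind.comp _ (by decide)
    have hBC : LinearIndependent ℝ ![B, C] := by
      have h2 : ![B, C] = ![A, B, C] ∘ (![1, 2] : Fin 2 → Fin 3) := by
        ext i; fin_cases i <;> rfl
      rw [h2]; exact hind.comp _ (by decide)
    set A' : V := A - ⟪A, C⟫ • C with hA'
    set B' : V := B - ⟪B, C⟫ • C with hB'
    have hCC : ⟪C, C⟫ = 1 := by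
      rw [real_inner_self_eq_norm_sq, hC]; norm_num
    have hA'0 : A' ≠ 0 := by
      intro h
      rw [linearIndependent_fin2] at hAC
      refine hAC.2 ⟪A, C⟫ ?_
      show ⟪A, C⟫ • C = A
      rw [hA'] at h
      exact (sub_eq_zero.mp h).symm
    have hB'0 : B' ≠ 0 := by
      intro h
      rw [linearIndependent_fin2] at hBC
      refine hBC.2 ⟪B, C⟫ ?_
      show ⟪B, C⟫ • C = B
      rw [hB'] at h
      exact (sub_eq_zero.mp h).symm
    have hcos_a : Real.cos a = ⟪B, C⟫ := by
      rw [ha, cos_angle, hB, hC]; norm_num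
    have hcos_b : Real.cos b = ⟪A, C⟫ := by
      rw [hb, cos_angle, hA, hC]; norm_num
    have hcos_c : Real.cos c = ⟪A, B⟫ := by
      rw [hc, cos_angle, hA, hB]; norm_num
    have hnA' : ‖A'‖ = Real.sin b := by
      have h1 : ‖A'‖ ^ 2 = Real.sin b ^ 2 := by
        rw [Real.sin_sq, hcos_b]
        rw [← real_inner_self_eq_norm_sq, hA']
        have hAA : ⟪A, A⟫ = 1 := by rw [real_inner_self_eq_norm_sq, hA]; norm_num
        simp only [inner_sub_left, inner_sub_right, real_inner_smul_left, real_inner_smul_right,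
          hCC, real_inner_comm C A, hAA]
        ring
      have h2 : 0 ≤ Real.sin b := Real.sin_nonneg_of_nonneg_of_le_pi (angle_nonneg _ _) (angle_le_pi _ _)
      nlinarith [norm_nonneg A']
    have hnB' : ‖B'‖ = Real.sin a := by
      have h1 : ‖B'‖ ^ 2 = Real.sin a ^ 2 := by
        rw [Real.sin_sq, hcos_a]
        rw [← real_inner_self_eq_norm_sq, hB']
        have hBB : ⟪B, B⟫ = 1 := by rw [real_inner_self_eq_norm_sq, hB]; norm_num
        simp only [inner_sub_left, inner_sub_right, real_inner_smul_left, real_inner_smul_right,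
          hCC, real_inner_comm C B, hBB]
        ring
      have h2 : 0 ≤ Real.sin a := Real.sin_nonneg_of_nonneg_of_le_pi (angle_nonneg _ _) (angle_le_pi _ _)
      nlinarith [norm_nonneg B']
    have hinner : ⟪A', B'⟫ = ⟪A, B⟫ - ⟪A, C⟫ * ⟪B, C⟫ := by
      rw [hA', hB']
      simp only [inner_sub_left, inner_sub_right, real_inner_smul_left, real_inner_smul_right,
        hCC, real_inner_comm C B, real_inner_comm C A]
      ring
    -- strict Cauchy-Schwarz lower bound
    have hle : -(‖A'‖ * ‖B'‖) ≤ ⟪A', B'⟫ :=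
      neg_le_of_neg_le (by simpa using (neg_le_abs _).trans (abs_real_inner_le_norm A' B'))
    have hne : ⟪A', B'⟫ ≠ -(‖A'‖ * ‖B'‖) := by
      intro h
      have hpi : angle A' B' = π := (inner_eq_neg_mul_norm_iff_angle_eq_pi hA'0 hB'0).mp (by linarith [h])
      obtain ⟨_, r, hr, hBA⟩ := angle_eq_pi_iff.mp hpi
      have hrel : r • A + (-1 : ℝ) • B + (⟪B, C⟫ - r * ⟪A, C⟫) • C = 0 := by
        rw [hB', hA'] at hBA
        linear_combination (norm := module) -hBA
      have := Fintype.linearIndependent_iff.mp hind ![r, -1, ⟪B, C⟫ - r * ⟪A, C⟫]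
        (by simpa [Fin.sum_univ_three] using hrel) 1
      norm_num at this
    have hlt : -(‖A'‖ * ‖B'‖) < ⟪A', B'⟫ := lt_of_le_of_ne hle (Ne.symm hne)
    have hcoslt : Real.cos (a + b) < Real.cos c := by
      rw [Real.cos_add, hcos_a, hcos_b, hcos_c]
      rw [hnA', hnB'] at hlt
      rw [hinner] at hlt
      nlinarith
    have hmem1 : c ∈ Set.Icc 0 π := ⟨angle_nonneg _ _, angle_le_pi _ _⟩
    have hmem2 : a + b ∈ Set.Icc 0 π := ⟨add_nonneg (angle_nonneg _ _) (angle_nonneg _ _), hπ⟩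
    exact (Real.strictAntiOn_cos.lt_iff_gt hmem2 hmem1).mp hcoslt
  · calc c ≤ π := angle_le_pi _ _
      _ < a + b := not_le.mp hπ

/-- The sides of a convex spherical triangle lie in `(0, π)` and satisfy the strict
triangle inequalities. -/
theorem spherical_triangle_sides (A B C : EuclideanSpace ℝ (Fin 3))
    (hind : LinearIndependent ℝ ![A, B, C])
    (hA : ‖A‖ = 1) (hB : ‖B‖ = 1) (hC : ‖C‖ = 1) :
    (0 < InnerProductGeometry.angle B C ∧ InnerProductGeometry.angle B C < Real.pi) ∧
    (0 < InnerProductGeometry.angle A C ∧ InnerProductGeometry.angle A C < Real.pi) ∧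
    (0 < InnerProductGeometry.angle A B ∧ InnerProductGeometry.angle A B < Real.pi) ∧
    InnerProductGeometry.angle B C + InnerProductGeometry.angle A C >
      InnerProductGeometry.angle A B ∧
    InnerProductGeometry.angle A C + InnerProductGeometry.angle A B >
      InnerProductGeometry.angle B C ∧
    InnerProductGeometry.angle B C + InnerProductGeometry.angle A B >
      InnerProductGeometry.angle A C := by
  have hBC : LinearIndependent ℝ ![B, C] := by
    have h2 : ![B, C] = ![A, B, C] ∘ (![1, 2] : Fin 2 → Fin 3) := by
      ext i; fin_cases i <;> rfl
    rw [h2]; exact hind.comp _ (by decide)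
  have hAC : LinearIndependent ℝ ![A, C] := by
    have h2 : ![A, C] = ![A, B, C] ∘ (![0, 2] : Fin 2 → Fin 3) := by
      ext i; fin_cases i <;> rfl
    rw [h2]; exact hind.comp _ (by decide)
  have hAB : LinearIndependent ℝ ![A, B] := by
    have h2 : ![A, B] = ![A, B, C] ∘ (![0, 1] : Fin 2 → Fin 3) := by
      ext i; fin_cases i <;> rfl
    rw [h2]; exact hind.comp _ (by decide)
  have hindBCA : LinearIndependent ℝ ![B, C, A] := by
    have h2 : ![B, C, A] = ![A, B, C] ∘ (![1, 2, 0] : Fin 3 → Fin 3) := by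
      ext i; fin_cases i <;> rfl
    rw [h2]; exact hind.comp _ (by decide)
  have hindACB : LinearIndependent ℝ ![A, C, B] := by
    have h2 : ![A, C, B] = ![A, B, C] ∘ (![0, 2, 1] : Fin 3 → Fin 3) := by
      ext i; fin_cases i <;> rfl
    rw [h2]; exact hind.comp _ (by decide)
  have t1 := aux_angle_lt A B C hind hA hB hC
  have t2 := aux_angle_lt B C A hindBCA hB hC hA
  have t3 := aux_angle_lt A C B hindACB hA hC hB
  rw [angle_comm C A, angle_comm B A] at t2
  rw [angle_comm C B] at t3
  exact ⟨aux_angle_mem B C hBC, aux_angle_mem A C hAC, aux_angle_mem A B hAB,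
    t1, t2, t3⟩
end

section
/- Let A, B, C be linearly independent unit vectors in ℝ³ (EuclideanSpace ℝ (Fin 3)). Define the corner angle at A as α = ∠(B − ⟪B,A⟫A, C − ⟪C,A⟫A), the angle between the orthogonal projections of B and C onto the tangent plane at A, and define the corner angles β at B and γ at C analogously. Then 0 < α < π, 0 < β < π, 0 < γ < π, and α + β < π + γ, β + γ < π + α, α + γ < π + β. -/
open scoped RealInnerProductSpace

/-- The corner angle of the spherical triangle with vertices `A`, `B`, `C` at the
vertex `A`: the angle between the orthogonal projections of `B` and `C` onto the
tangent plane of the unit sphere at `A`. -/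
noncomputable def cornerAngle (A B C : EuclideanSpace ℝ (Fin 3)) : ℝ :=
  InnerProductGeometry.angle (B - ⟪B, A⟫ • A) (C - ⟪C, A⟫ • A)

open InnerProductGeometry Real in
/-- Auxiliary: cross product on `EuclideanSpace ℝ (Fin 3)`. -/
noncomputable def cpAux (x y : EuclideanSpace ℝ (Fin 3)) : EuclideanSpace ℝ (Fin 3) :=
  WithLp.toLp 2 ![x 1 * y 2 - x 2 * y 1, x 2 * y 0 - x 0 * y 2, x 0 * y 1 - x 1 * y 0]

lemma cpAux_inner (x y z : EuclideanSpace ℝ (Fin 3)) :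
    ⟪cpAux z x, cpAux x y⟫ = ⟪z,x⟫ * ⟪x,y⟫ - ⟪z,y⟫ * ⟪x,x⟫ := by
  simp [cpAux, PiLp.inner_apply, Fin.sum_univ_three, RCLike.inner_apply, -inner_self_eq_norm_sq_to_K]
  ring

lemma cpAux_self (x y : EuclideanSpace ℝ (Fin 3)) :
    ⟪cpAux x y, cpAux x y⟫ = ⟪x,x⟫ * ⟪y,y⟫ - ⟪x,y⟫ ^ 2 := by
  simp [cpAux, PiLp.inner_apply, Fin.sum_univ_three, RCLike.inner_apply, -inner_self_eq_norm_sq_to_K]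
  ring

lemma cpAux_anti (x y : EuclideanSpace ℝ (Fin 3)) : cpAux x y = - cpAux y x := by
  ext i
  fin_cases i <;> simp [cpAux] <;> ring

section AngleLemmas

open InnerProductGeometry Real

variable {V : Type*} [NormedAddCommGroup V] [InnerProductSpace ℝ V]

lemma angle_bounds_aux {x y : V} (hxy : ∀ r : ℝ, y ≠ r • x) :
    0 < angle x y ∧ angle x y < π := by
  constructor
  · rcases lt_or_eq_of_le (angle_nonneg x y) with h | h
    · exact h
    · exfalso
      obtain ⟨-, r, -, hy⟩ := angle_eq_zero_iff.mp h.symm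
      exact hxy r hy
  · rcases lt_or_eq_of_le (angle_le_pi x y) with h | h
    · exact h
    · exfalso
      obtain ⟨-, r, -, hy⟩ := angle_eq_pi_iff.mp h
      exact hxy r hy

lemma strictTriUnit {u v w : V}
    (h : ∀ a b c : ℝ, a • u + b • v + c • w = 0 → a = 0 ∧ b = 0 ∧ c = 0)
    (hu : ‖u‖ = 1) (hv : ‖v‖ = 1) (hw : ‖w‖ = 1) :
    angle u w < angle u v + angle v w := by
  have huw : ∀ r : ℝ, w ≠ r • u := by
    intro r hr
    have := (h r (0 : ℝ) (-1) (by rw [hr]; module)).2.2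
    norm_num at this
  have hcπ : angle u w < π := (angle_bounds_aux huw).2
  rcases le_or_gt π (angle u v + angle v w) with hab | hab
  · exact lt_of_lt_of_le hcπ hab
  -- nondegenerate case
  set p := ⟪u, v⟫ with hp
  set q := ⟪v, w⟫ with hq
  set r := ⟪u, w⟫ with hr
  have hvv : ⟪v, v⟫ = 1 := by
    rw [real_inner_self_eq_norm_sq, hv]; norm_num
  set u' := u - p • v with hu'
  set w' := w - q • v with hw'
  have hp' : ⟪v, u⟫ = p := by rw [hp, real_inner_comm]
  have hq' : ⟪v, w⟫ = q := hq.symm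
  have hq'' : ⟪w, v⟫ = q := by rw [hq, real_inner_comm]
  have hp'' : ⟪u, v⟫ = p := hp.symm
  have huu : ⟪u, u⟫ = 1 := by rw [real_inner_self_eq_norm_sq, hu]; norm_num
  have hww : ⟪w, w⟫ = 1 := by rw [real_inner_self_eq_norm_sq, hw]; norm_num
  have hiuw : ⟪u', w'⟫ = r - p * q := by
    simp only [hu', hw', inner_sub_left, inner_sub_right, real_inner_smul_left,
      real_inner_smul_right, hvv, hp', hq', hp'', hq'', ← hr]
    ring
  have hiuu : ⟪u', u'⟫ = 1 - p ^ 2 := by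
    simp only [hu', inner_sub_left, inner_sub_right, real_inner_smul_left,
      real_inner_smul_right, hvv, huu, hp', hp'']
    ring
  have hiww : ⟪w', w'⟫ = 1 - q ^ 2 := by
    simp only [hw', inner_sub_left, inner_sub_right, real_inner_smul_left,
      real_inner_smul_right, hvv, hww, hq', hq'']
    ring
  have hnu' : ‖u'‖ = Real.sqrt (1 - p ^ 2) := by
    rw [← hiuu, real_inner_self_eq_norm_sq, Real.sqrt_sq (norm_nonneg _)]
  have hnw' : ‖w'‖ = Real.sqrt (1 - q ^ 2) := by
    rw [← hiww, real_inner_self_eq_norm_sq, Real.sqrt_sq (norm_nonneg _)]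
  have hu'0 : u' ≠ 0 := by
    intro h0
    have : (1 : ℝ) • u + (-p) • v + (0 : ℝ) • w = 0 := by
      rw [hu', sub_eq_zero] at h0; rw [h0]; module
    have := (h 1 (-p) 0 this).1
    norm_num at this
  have hw'0 : w' ≠ 0 := by
    intro h0
    have : (0 : ℝ) • u + (-q) • v + (1 : ℝ) • w = 0 := by
      rw [hw', sub_eq_zero] at h0; rw [h0]; module
    have := (h 0 (-q) 1 this).2.2
    norm_num at this
  have key : -⟪u', w'⟫ < ‖u'‖ * ‖w'‖ := by
    have h2 : ⟪-u', w'⟫ < ‖-u'‖ * ‖w'‖ := by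
      rw [inner_lt_norm_mul_iff_real]
      intro heq
      -- heq : ‖w'‖ • -u' = ‖-u'‖ • w'
      rw [norm_neg] at heq
      have hnu0 : ‖u'‖ ≠ 0 := norm_ne_zero_iff.mpr hu'0
      have hwe : w' = (-(‖w'‖ / ‖u'‖)) • u' := by
        have h1 : ‖u'‖ • w' = (-‖w'‖) • u' := by rw [← heq]; module
        have h2 : w' = ‖u'‖⁻¹ • ((-‖w'‖) • u') := by
          rw [← h1, smul_smul, inv_mul_cancel₀ hnu0, one_smul]
        have h3 : ‖u'‖⁻¹ * -‖w'‖ = -(‖w'‖ / ‖u'‖) := by field_simp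
        conv_lhs => rw [h2]
        rw [smul_smul, h3]
      set s := -(‖w'‖ / ‖u'‖) with hs
      have hcomb : s • u + (q - s * p) • v + (-1 : ℝ) • w = 0 := by
        have : w - q • v = s • (u - p • v) := by rw [← hu', ← hw', hwe]
        rw [smul_sub, smul_smul] at this
        rw [eq_comm, sub_eq_iff_eq_add] at this
        rw [this]; module
      have := (h s (q - s * p) (-1) hcomb).2.2
      norm_num at this
    rwa [inner_neg_left, norm_neg] at h2
  have ha0 := angle_nonneg u v
  have hb0 := angle_nonneg v w
  have haπ := angle_le_pi u v
  have hbπ := angle_le_pi v w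
  have hca : Real.cos (angle u v) = p := by rw [cos_angle, hu, hv]; simp [hp]
  have hcb : Real.cos (angle v w) = q := by rw [cos_angle, hv, hw]; simp [hq]
  have hcc : Real.cos (angle u w) = r := by rw [cos_angle, hu, hw]; simp [hr]
  have hsa : Real.sin (angle u v) = ‖u'‖ := by
    rw [Real.sin_eq_sqrt_one_sub_cos_sq ha0 haπ, hca, hnu']
  have hsb : Real.sin (angle v w) = ‖w'‖ := by
    rw [Real.sin_eq_sqrt_one_sub_cos_sq hb0 hbπ, hcb, hnw']
  by_contra hcon
  push_neg at hcon
  have hmono : Real.cos (angle u w) ≤ Real.cos (angle u v + angle v w) :=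
    Real.cos_le_cos_of_nonneg_of_le_pi (by linarith) (angle_le_pi u w) hcon
  rw [Real.cos_add, hca, hcb, hcc, hsa, hsb] at hmono
  rw [hiuw] at key
  linarith

lemma strictTri {u v w : V}
    (h : ∀ a b c : ℝ, a • u + b • v + c • w = 0 → a = 0 ∧ b = 0 ∧ c = 0) :
    angle u w < angle u v + angle v w := by
  have hu0 : u ≠ 0 := by
    intro h0
    have := (h 1 0 0 (by rw [h0]; module)).1; norm_num at this
  have hv0 : v ≠ 0 := by
    intro h0
    have := (h 0 1 0 (by rw [h0]; module)).2.1; norm_num at this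
  have hw0 : w ≠ 0 := by
    intro h0
    have := (h 0 0 1 (by rw [h0]; module)).2.2; norm_num at this
  have hnu : (0 : ℝ) < ‖u‖⁻¹ := inv_pos.mpr (norm_pos_iff.mpr hu0)
  have hnv : (0 : ℝ) < ‖v‖⁻¹ := inv_pos.mpr (norm_pos_iff.mpr hv0)
  have hnw : (0 : ℝ) < ‖w‖⁻¹ := inv_pos.mpr (norm_pos_iff.mpr hw0)
  have h' : ∀ a b c : ℝ,
      a • (‖u‖⁻¹ • u) + b • (‖v‖⁻¹ • v) + c • (‖w‖⁻¹ • w) = 0 →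
      a = 0 ∧ b = 0 ∧ c = 0 := by
    intro a b c h0
    rw [smul_smul, smul_smul, smul_smul] at h0
    obtain ⟨ha, hb, hc⟩ := h _ _ _ h0
    exact ⟨(mul_eq_zero.mp ha).resolve_right (ne_of_gt hnu),
      (mul_eq_zero.mp hb).resolve_right (ne_of_gt hnv),
      (mul_eq_zero.mp hc).resolve_right (ne_of_gt hnw)⟩
  have := strictTriUnit h' (norm_smul_inv_norm hu0) (norm_smul_inv_norm hv0)
    (norm_smul_inv_norm hw0)
  rwa [angle_smul_left_of_pos _ _ hnu, angle_smul_right_of_pos _ _ hnw,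
    angle_smul_left_of_pos _ _ hnu, angle_smul_right_of_pos _ _ hnv,
    angle_smul_left_of_pos _ _ hnv, angle_smul_right_of_pos _ _ hnw] at this

end AngleLemmas

lemma li_form (A B C : EuclideanSpace ℝ (Fin 3)) (hind : LinearIndependent ℝ ![A, B, C]) :
    ∀ a b c : ℝ, a • cpAux B C + b • cpAux C A + c • cpAux A B = 0 →
      a = 0 ∧ b = 0 ∧ c = 0 := by
  set e := WithLp.linearEquiv 2 ℝ (Fin 3 → ℝ) with he
  have h1 : LinearIndependent ℝ (⇑e ∘ ![A, B, C]) :=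
    hind.map' e.toLinearMap e.ker
  have h2 : (⇑e ∘ ![A, B, C]) = ![e A, e B, e C] := by
    funext i; fin_cases i <;> rfl
  set M : Matrix (Fin 3) (Fin 3) ℝ := Matrix.of ![e A, e B, e C] with hM
  have hMu : IsUnit M := Matrix.linearIndependent_rows_iff_isUnit.mp (by
    rw [h2] at h1; exact h1)
  have hdM : M.det ≠ 0 := ((Matrix.isUnit_iff_isUnit_det M).mp hMu).ne_zero
  set N : Matrix (Fin 3) (Fin 3) ℝ :=
    Matrix.of ![e (cpAux B C), e (cpAux C A), e (cpAux A B)] with hN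
  have he' : ∀ (x : EuclideanSpace ℝ (Fin 3)) (i : Fin 3), e x i = x i := fun _ _ => rfl
  have hdet : N.det = M.det ^ 2 := by
    simp only [he', hN, hM, Matrix.det_fin_three, Matrix.of_apply, Matrix.cons_val',
      Matrix.cons_val_zero, Matrix.cons_val_one, Matrix.head_cons, Matrix.head_fin_const,
      Matrix.cons_val_fin_one, Matrix.cons_val_two, Matrix.tail_cons,
      WithLp.linearEquiv_apply, PiLp.toLp_apply, cpAux]
    ring
  have hNu : IsUnit N := (Matrix.isUnit_iff_isUnit_det N).mpr
    (isUnit_iff_ne_zero.mpr (by rw [hdet]; exact pow_ne_zero 2 hdM))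
  have hNli : LinearIndependent ℝ (fun i => N i) :=
    Matrix.linearIndependent_rows_iff_isUnit.mpr hNu
  intro a b c hab
  have hsum : ∑ i : Fin 3, (![a, b, c]) i • (fun i => N i) i = 0 := by
    have := congrArg e hab
    simp only [map_add, map_smul, map_zero] at this
    rw [Fin.sum_univ_three]; exact this
  have hz := Fintype.linearIndependent_iff.mp hNli ![a, b, c] hsum
  exact ⟨hz 0, hz 1, hz 2⟩

open InnerProductGeometry Real in
lemma corner_eq (X Y Z : EuclideanSpace ℝ (Fin 3)) (hX : ‖X‖ = 1) :
    cornerAngle X Y Z = π - InnerProductGeometry.angle (cpAux Z X) (cpAux X Y) := by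
  have hXX : ⟪X,X⟫ = 1 := by rw [real_inner_self_eq_norm_sq, hX]; norm_num
  have hnum : ⟪cpAux Z X, cpAux X Y⟫ = -⟪Y - ⟪Y,X⟫ • X, Z - ⟪Z,X⟫ • X⟫ := by
    rw [cpAux_inner]
    simp only [inner_sub_left, inner_sub_right, real_inner_smul_left, real_inner_smul_right, hXX]
    rw [real_inner_comm Z X, real_inner_comm X Y, real_inner_comm Y Z]
    ring
  have hsq : ∀ W : EuclideanSpace ℝ (Fin 3),
      ‖W - ⟪W,X⟫ • X‖ ^ 2 = ⟪W,W⟫ - ⟪W,X⟫ ^ 2 := by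
    intro W
    rw [← real_inner_self_eq_norm_sq]
    simp only [inner_sub_left, inner_sub_right, real_inner_smul_left, real_inner_smul_right, hXX]
    rw [real_inner_comm X W]
    ring
  have k1 : ‖cpAux X Y‖ ^ 2 = ‖Y - ⟪Y,X⟫ • X‖ ^ 2 := by
    rw [hsq, ← real_inner_self_eq_norm_sq, cpAux_self, hXX, real_inner_comm Y X]
    ring
  have k2 : ‖cpAux Z X‖ ^ 2 = ‖Z - ⟪Z,X⟫ • X‖ ^ 2 := by
    rw [hsq, ← real_inner_self_eq_norm_sq, cpAux_self, hXX]
    ring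
  have hn1 : ‖cpAux X Y‖ = ‖Y - ⟪Y,X⟫ • X‖ := by
    rw [← Real.sqrt_sq (norm_nonneg (cpAux X Y)), k1, Real.sqrt_sq (norm_nonneg _)]
  have hn2 : ‖cpAux Z X‖ = ‖Z - ⟪Z,X⟫ • X‖ := by
    rw [← Real.sqrt_sq (norm_nonneg (cpAux Z X)), k2, Real.sqrt_sq (norm_nonneg _)]
  unfold cornerAngle InnerProductGeometry.angle
  rw [hnum, hn1, hn2]
  rw [show -⟪Y - ⟪Y,X⟫ • X, Z - ⟪Z,X⟫ • X⟫ / (‖Z - ⟪Z,X⟫ • X‖ * ‖Y - ⟪Y,X⟫ • X‖)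
      = -(⟪Y - ⟪Y,X⟫ • X, Z - ⟪Z,X⟫ • X⟫ / (‖Y - ⟪Y,X⟫ • X‖ * ‖Z - ⟪Z,X⟫ • X‖)) from by
    rw [neg_div, mul_comm]]
  rw [Real.arccos_neg]
  ring

/-- The corner angles of a convex spherical triangle lie in `(0, π)` and satisfy
`α + β < π + γ` together with its cyclic variants. -/
theorem spherical_triangle_angles (A B C : EuclideanSpace ℝ (Fin 3))
    (hind : LinearIndependent ℝ ![A, B, C])
    (hA : ‖A‖ = 1) (hB : ‖B‖ = 1) (hC : ‖C‖ = 1) :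
    (0 < cornerAngle A B C ∧ cornerAngle A B C < Real.pi) ∧
    (0 < cornerAngle B A C ∧ cornerAngle B A C < Real.pi) ∧
    (0 < cornerAngle C A B ∧ cornerAngle C A B < Real.pi) ∧
    cornerAngle A B C + cornerAngle B A C < Real.pi + cornerAngle C A B ∧
    cornerAngle B A C + cornerAngle C A B < Real.pi + cornerAngle A B C ∧
    cornerAngle A B C + cornerAngle C A B < Real.pi + cornerAngle B A C := by
  have lf := li_form A B C hind
  set nA := cpAux B C with hnA
  set nB := cpAux C A with hnB
  set nC := cpAux A B with hnC
  have hBCp : ∀ r : ℝ, nC ≠ r • nB := by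
    intro r h0
    have := (lf 0 (-r) 1 (by rw [h0]; module)).2.2
    norm_num at this
  have hABp : ∀ r : ℝ, nB ≠ r • nA := by
    intro r h0
    have := (lf (-r) 1 0 (by rw [h0]; module)).2.1
    norm_num at this
  have hACp : ∀ r : ℝ, nC ≠ r • nA := by
    intro r h0
    have := (lf (-r) 0 1 (by rw [h0]; module)).2.2
    norm_num at this
  have b1 := angle_bounds_aux hBCp
  have b2 := angle_bounds_aux hABp
  have b3 := angle_bounds_aux hACp
  have t1 : InnerProductGeometry.angle nA nB <
      InnerProductGeometry.angle nA nC + InnerProductGeometry.angle nC nB := by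
    apply strictTri
    intro a b c h0
    obtain ⟨ha, hc, hb⟩ := lf a c b (by rw [← h0]; module)
    exact ⟨ha, hb, hc⟩
  have t2 : InnerProductGeometry.angle nB nC <
      InnerProductGeometry.angle nB nA + InnerProductGeometry.angle nA nC := by
    apply strictTri
    intro a b c h0
    obtain ⟨hb, ha, hc⟩ := lf b a c (by rw [← h0]; module)
    exact ⟨ha, hb, hc⟩
  have t3 : InnerProductGeometry.angle nA nC <
      InnerProductGeometry.angle nA nB + InnerProductGeometry.angle nB nC := by
    apply strictTri
    intro a b c h0
    exact lf a b c h0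
  rw [InnerProductGeometry.angle_comm nC nB] at t1
  rw [InnerProductGeometry.angle_comm nB nA] at t2
  have eA : cornerAngle A B C = Real.pi - InnerProductGeometry.angle nB nC := by
    rw [corner_eq A B C hA]
  have eB : cornerAngle B A C = Real.pi - InnerProductGeometry.angle nA nC := by
    rw [corner_eq B A C hB, hnA, hnC, cpAux_anti C B, cpAux_anti B A,
      InnerProductGeometry.angle_neg_neg]
  have eC : cornerAngle C A B = Real.pi - InnerProductGeometry.angle nA nB := by
    rw [corner_eq C A B hC]
  rw [eA, eB, eC]
  refine ⟨⟨by linarith [b1.2], by linarith [b1.1]⟩,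
    ⟨by linarith [b3.2], by linarith [b3.1]⟩,
    ⟨by linarith [b2.2], by linarith [b2.1]⟩,
    by linarith, by linarith, by linarith⟩
end

section
/- Let v, h : ℕ → ℕ be finitely supported functions with v(k) = 0 for all k < 2 and h(l) = 0 for all l < 1, let V = Σₖ v(k) and H = Σₗ h(l), and let f be a natural number such that 3f = Σₖ k·v(k) + Σₗ l·h(l) and f + 4 = 2V + H. Then 3f + 2v(2) + h(1) = 12 + Σ_{k≥4} 2(k−3)·v(k) + Σ_{l≥2} (2l−3)·h(l). -/
/-- Equation (4): vertex-degree counting identity for non-side-to-side tilings. -/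
theorem vertex_count_eq4 (v h : ℕ →₀ ℕ)
    (hv : ∀ k < 2, v k = 0) (hh : ∀ l < 1, h l = 0)
    (f : ℕ)
    (hcorner : 3 * f = (v.sum fun k n => k * n) + (h.sum fun l n => l * n))
    (heuler : f + 4 = 2 * (v.sum fun _ n => n) + (h.sum fun _ n => n)) :
    3 * f + 2 * v 2 + h 1 =
      12 + (∑ k ∈ v.support.filter (fun k => 4 ≤ k), 2 * (k - 3) * v k)
         + (∑ l ∈ h.support.filter (fun l => 2 ≤ l), (2 * l - 3) * h l) := by
  have E1 : ∑ k ∈ v.support.filter (fun k => 4 ≤ k), (2*((k:ℤ)-3)*(v k))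
      = (∑ k ∈ v.support, 2*((k:ℤ)-3)*(v k)) + 2 * (v 2 : ℤ) := by
    rw [Finset.sum_filter]
    have hcong : ∀ k ∈ v.support, (if 4 ≤ k then 2*((k:ℤ)-3)*(v k) else 0)
        = 2*((k:ℤ)-3)*(v k) + (if k = 2 then 2*(v k : ℤ) else 0) := by
      intro k hk
      have hk2 : 2 ≤ k := by
        by_contra hc
        exact (Finsupp.mem_support_iff.mp hk) (hv k (by omega))
      rcases Nat.lt_or_ge k 4 with h4 | h4
      · interval_cases k
        · simp
        · simp
      · have : k ≠ 2 := by omega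
        simp [h4, this]
    rw [Finset.sum_congr rfl hcong, Finset.sum_add_distrib,
      Finset.sum_ite_eq' v.support 2 (fun k => 2*(v k : ℤ))]
    by_cases h2 : 2 ∈ v.support
    · simp [h2]
    · have : v 2 = 0 := Finsupp.notMem_support_iff.mp h2
      simp [h2, this]
  have E2 : ∑ l ∈ h.support.filter (fun l => 2 ≤ l), ((2*(l:ℤ)-3)*(h l))
      = (∑ l ∈ h.support, (2*(l:ℤ)-3)*(h l)) + (h 1 : ℤ) := by
    rw [Finset.sum_filter]
    have hcong : ∀ l ∈ h.support, (if 2 ≤ l then (2*(l:ℤ)-3)*(h l) else 0)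
        = (2*(l:ℤ)-3)*(h l) + (if l = 1 then (h l : ℤ) else 0) := by
      intro l hl
      have hl1 : 1 ≤ l := by
        by_contra hc
        exact (Finsupp.mem_support_iff.mp hl) (hh l (by omega))
      rcases Nat.lt_or_ge l 2 with h2 | h2
      · interval_cases l
        simp
      · have : l ≠ 1 := by omega
        simp [h2, this]
    rw [Finset.sum_congr rfl hcong, Finset.sum_add_distrib,
      Finset.sum_ite_eq' h.support 1 (fun l => (h l : ℤ))]
    by_cases h1 : 1 ∈ h.support
    · simp [h1]
    · have : h 1 = 0 := Finsupp.notMem_support_iff.mp h1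
      simp [h1, this]
  -- expand the ℤ sums
  have Ev : (∑ k ∈ v.support, 2*((k:ℤ)-3)*(v k))
      = 2 * (∑ k ∈ v.support, (k:ℤ)*(v k)) - 6 * (∑ k ∈ v.support, (v k : ℤ)) := by
    rw [Finset.mul_sum, Finset.mul_sum, ← Finset.sum_sub_distrib]
    exact Finset.sum_congr rfl (fun k _ => by ring)
  have Eh : (∑ l ∈ h.support, (2*(l:ℤ)-3)*(h l))
      = 2 * (∑ l ∈ h.support, (l:ℤ)*(h l)) - 3 * (∑ l ∈ h.support, (h l : ℤ)) := by
    rw [Finset.mul_sum, Finset.mul_sum, ← Finset.sum_sub_distrib]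
    exact Finset.sum_congr rfl (fun l _ => by ring)
  have hZ : ((3 * f + 2 * v 2 + h 1 : ℕ) : ℤ) =
      ((12 + (∑ k ∈ v.support.filter (fun k => 4 ≤ k), 2 * (k - 3) * v k)
         + (∑ l ∈ h.support.filter (fun l => 2 ≤ l), (2 * l - 3) * h l) : ℕ) : ℤ) := by
    push_cast
    have c1 : ∀ k ∈ v.support.filter (fun k => 4 ≤ k),
        2 * ((k - 3 : ℕ) : ℤ) * (v k : ℤ) = 2*((k:ℤ)-3)*(v k) := by
      intro k hk
      have h4 : 4 ≤ k := (Finset.mem_filter.mp hk).2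
      have hc : ((k - 3 : ℕ) : ℤ) = (k : ℤ) - 3 := by omega
      rw [hc]
    have c2 : ∀ l ∈ h.support.filter (fun l => 2 ≤ l),
        ((2 * l - 3 : ℕ) : ℤ) * (h l : ℤ) = (2*(l:ℤ)-3)*(h l) := by
      intro l hl
      have h2 : 2 ≤ l := (Finset.mem_filter.mp hl).2
      have hc : ((2 * l - 3 : ℕ) : ℤ) = 2 * (l : ℤ) - 3 := by omega
      rw [hc]
    rw [Finset.sum_congr rfl c1, Finset.sum_congr rfl c2, E1, E2, Ev, Eh]
    rw [Finsupp.sum, Finsupp.sum] at hcorner heuler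
    have hc' : 3 * (f : ℤ) = (∑ k ∈ v.support, (k:ℤ)*(v k)) + (∑ l ∈ h.support, (l:ℤ)*(h l)) := by
      exact_mod_cast hcorner
    have he' : (f : ℤ) + 4 = 2 * (∑ k ∈ v.support, (v k : ℤ)) + (∑ l ∈ h.support, (h l : ℤ)) := by
      exact_mod_cast heuler
    linarith
  exact Nat.cast_injective hZ
end

section
/- Let v, h : ℕ → ℕ be finitely supported functions with v(k) = 0 for all k ≤ 2 and h(l) = 0 for all l ≤ 1, let V = Σₖ v(k) and H = Σₗ h(l), and let f be a natural number such that 3f = Σₖ k·v(k) + Σₗ l·h(l), f + 4 = 2V + H, and H ≥ 1. Then f ≥ 5 and 3v(3) + 2v(4) + v(5) + h(2) ≥ 12. -/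
/-- A weighted lower bound: if the support of `v` avoids degrees `< m`, then
`m * Σ v ≤ Σ k * v k`. -/
lemma deg_lower (v : ℕ →₀ ℕ) (m : ℕ) (hv : ∀ k < m, v k = 0) :
    m * (v.sum fun _ n => n) ≤ v.sum fun k n => k * n := by
  rw [Finsupp.sum, Finsupp.sum, Finset.mul_sum]
  apply Finset.sum_le_sum
  intro k hk
  have : m ≤ k := by
    by_contra hlt
    exact (Finsupp.mem_support_iff.mp hk) (hv k (by omega))
  exact Nat.mul_le_mul_right _ this

lemma deficiency_bound (v : ℕ →₀ ℕ) (m : ℕ) :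
    (v.sum fun k n => (m - k) * n) ≤ ∑ k ∈ Finset.range m, (m - k) * v k := by
  rw [Finsupp.sum]
  rw [← Finset.sum_filter_add_sum_filter_not v.support (· < m)]
  have h2 : ∑ k ∈ v.support.filter (fun k => ¬ k < m), (m - k) * v k = 0 := by
    apply Finset.sum_eq_zero
    intro k hk
    have : ¬ k < m := (Finset.mem_filter.mp hk).2
    have : m - k = 0 := by omega
    simp [this]
  rw [h2, add_zero]
  apply Finset.sum_le_sum_of_subset_of_nonneg
  · intro k hk
    simp only [Finset.mem_filter] at hk
    exact Finset.mem_range.mpr hk.2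
  · intros; positivity

/-- In a non-side-to-side tiling by congruent scalene convex triangles, `f ≥ 5` and a
full vertex of degree 3, 4, 5 or a half vertex of degree 2 must appear. -/
theorem small_vertex_must_appear (v h : ℕ →₀ ℕ)
    (hv : ∀ k ≤ 2, v k = 0) (hh : ∀ l ≤ 1, h l = 0)
    (f : ℕ)
    (hcorner : 3 * f = (v.sum fun k n => k * n) + (h.sum fun l n => l * n))
    (heuler : f + 4 = 2 * (v.sum fun _ n => n) + (h.sum fun _ n => n))
    (hH : 1 ≤ h.sum fun _ n => n) :
    5 ≤ f ∧ 12 ≤ 3 * v 3 + 2 * v 4 + v 5 + h 2 := by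
  have hv' : ∀ k < 3, v k = 0 := fun k hk => hv k (by omega)
  have hh' : ∀ l < 2, h l = 0 := fun l hl => hh l (by omega)
  have hA : 3 * (v.sum fun _ n => n) ≤ v.sum fun k n => k * n := deg_lower v 3 hv'
  have hB : 2 * (h.sum fun _ n => n) ≤ h.sum fun l n => l * n := deg_lower h 2 hh'
  -- 6V ≤ Sv + (3v3+2v4+v5)
  have hC : 6 * (v.sum fun _ n => n) ≤ (v.sum fun k n => k * n) + (3 * v 3 + 2 * v 4 + v 5) := by
    have h1 : 6 * (v.sum fun _ n => n) ≤ (v.sum fun k n => k * n) + (v.sum fun k n => (6 - k) * n) := by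
      rw [Finsupp.sum, Finsupp.sum, Finsupp.sum, Finset.mul_sum, ← Finset.sum_add_distrib]
      apply Finset.sum_le_sum
      intro k _
      have : k * v k + (6 - k) * v k = (k + (6 - k)) * v k := by ring
      rw [this]
      exact Nat.mul_le_mul_right _ (by omega)
    have h2 := deficiency_bound v 6
    have h3 : ∑ k ∈ Finset.range 6, (6 - k) * v k = 3 * v 3 + 2 * v 4 + v 5 := by
      simp [Finset.sum_range_succ, hv 0 (by omega), hv 1 (by omega), hv 2 (by omega)]
    omega
  have hD : 3 * (h.sum fun _ n => n) ≤ (h.sum fun l n => l * n) + h 2 := by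
    have h1 : 3 * (h.sum fun _ n => n) ≤ (h.sum fun l n => l * n) + (h.sum fun l n => (3 - l) * n) := by
      rw [Finsupp.sum, Finsupp.sum, Finsupp.sum, Finset.mul_sum, ← Finset.sum_add_distrib]
      apply Finset.sum_le_sum
      intro l _
      have : l * h l + (3 - l) * h l = (l + (3 - l)) * h l := by ring
      rw [this]
      exact Nat.mul_le_mul_right _ (by omega)
    have h2 := deficiency_bound h 3
    have h3 : ∑ l ∈ Finset.range 3, (3 - l) * h l = h 2 := by
      simp [Finset.sum_range_succ, hh 0 (by omega), hh 1 (by omega)]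
    omega
  omega
end

section
/- Let f be a positive integer and let α, β, γ be real numbers with α = 2π/3, β > γ > 0, and α + β + γ = (1 + 4/f)·π. Suppose at least one of α/π, β/π, γ/π is irrational, and let n₁, n₂, n₃ be natural numbers with n₁·α + n₂·β + n₃·γ = 2π. Then n₂ = n₃ and n₂ ≤ 5. -/
/-- Case `α³` of the Irrational Angle Lemma: every vertex satisfies `n₂ = n₃ ≤ 5`. -/
theorem case_alpha_cubed (f : ℕ) (hf : 0 < f) (α β γ : ℝ)
    (hα : α = 2 * Real.pi / 3) (hβγ : β > γ) (hγ : γ > 0)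
    (hsum : α + β + γ = (1 + 4 / (f : ℝ)) * Real.pi)
    (hirr : Irrational (α / Real.pi) ∨ Irrational (β / Real.pi) ∨ Irrational (γ / Real.pi))
    (n₁ n₂ n₃ : ℕ)
    (hvertex : (n₁ : ℝ) * α + (n₂ : ℝ) * β + (n₃ : ℝ) * γ = 2 * Real.pi) :
    n₂ = n₃ ∧ n₂ ≤ 5 := by
  have hπ : (0:ℝ) < Real.pi := Real.pi_pos
  have hπ0 : Real.pi ≠ 0 := ne_of_gt hπ
  have hfR : (0:ℝ) < (f:ℝ) := by exact_mod_cast hf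
  set b := β / Real.pi with hbdef
  set c := γ / Real.pi with hcdef
  have hβπ : β = b * Real.pi := by rw [hbdef]; field_simp
  have hγπ : γ = c * Real.pi := by rw [hcdef]; field_simp
  rw [hα, hβπ, hγπ] at hvertex hsum
  have key : (n₁:ℝ) * (2/3) + n₂ * b + n₃ * c = 2 :=
    mul_right_cancel₀ hπ0 (by linear_combination hvertex)
  have hbc : b + c = 1/3 + 4/(f:ℝ) :=
    mul_right_cancel₀ hπ0 (by linear_combination hsum)
  have hαrat : ¬ Irrational (α / Real.pi) := by
    rw [hα]
    have h23 : (2 * Real.pi / 3) / Real.pi = ((2/3 : ℚ) : ℝ) := by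
      push_cast; field_simp
    rw [h23]
    exact Rat.not_irrational _
  have hbirr : Irrational b := by
    rcases hirr with h | h | h
    · exact absurd h hαrat
    · exact h
    · have hb' : b = ((1/3 + 4/(f:ℚ) : ℚ) : ℝ) - c := by push_cast; linarith [hbc]
      rw [hb']
      exact h.ratCast_sub (q := _)
  by_cases h23 : n₂ = n₃
  · refine ⟨h23, ?_⟩
    subst h23
    by_contra hn
    push_neg at hn
    have hn2 : (6:ℝ) ≤ (n₂:ℝ) := by exact_mod_cast hn
    have hn1 : (0:ℝ) ≤ (n₁:ℝ) := Nat.cast_nonneg _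
    have h4f : (0:ℝ) < 4/(f:ℝ) := by positivity
    have hmul : (n₂:ℝ) * (b + c) = (n₂:ℝ) * (1/3 + 4/(f:ℝ)) := by rw [hbc]
    have hge : (6:ℝ) * (4/(f:ℝ)) ≤ (n₂:ℝ) * (4/(f:ℝ)) :=
      mul_le_mul_of_nonneg_right hn2 (le_of_lt h4f)
    nlinarith [key, hmul, hge, h4f, hn1, hn2]
  · exfalso
    have hd : ((n₂:ℝ) - (n₃:ℝ)) ≠ 0 := sub_ne_zero.mpr (by exact_mod_cast h23)
    set q : ℚ := (2 - (n₁:ℚ)*(2/3) - (n₃:ℚ)*(1/3 + 4/(f:ℚ))) / ((n₂:ℚ) - (n₃:ℚ)) with hq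
    have hfQ : (f:ℚ) ≠ 0 := by exact_mod_cast hf.ne'
    have hqR : (q:ℝ) = (2 - (n₁:ℝ)*(2/3) - (n₃:ℝ)*(1/3 + 4/(f:ℝ))) / ((n₂:ℝ) - (n₃:ℝ)) := by
      rw [hq]; push_cast; ring
    have hbq : b = (q:ℝ) := by
      rw [hqR, eq_div_iff hd]
      linear_combination key - (n₃:ℝ) * hbc
    exact Rat.not_irrational q (hbq ▸ hbirr)
end

section
/- Let f be a positive integer and let α, β, γ be real numbers with 2α + β = 2π and α + β + γ = (1 + 4/f)·π. Suppose at least one of α/π, β/π, γ/π is irrational, and let n₁, n₂, n₃ be natural numbers with n₁·α + n₂·β + n₃·γ = 2π. Then 2n₂ = n₁ + n₃. -/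
/-- Case `α²β` of the Irrational Angle Lemma: every vertex satisfies `2n₂ = n₁ + n₃`. -/
theorem case_alpha_sq_beta (f : ℕ) (hf : 0 < f) (α β γ : ℝ)
    (hαβ : 2 * α + β = 2 * Real.pi)
    (hsum : α + β + γ = (1 + 4 / (f : ℝ)) * Real.pi)
    (hirr : Irrational (α / Real.pi) ∨ Irrational (β / Real.pi) ∨ Irrational (γ / Real.pi))
    (n₁ n₂ n₃ : ℕ)
    (hvertex : (n₁ : ℝ) * α + (n₂ : ℝ) * β + (n₃ : ℝ) * γ = 2 * Real.pi) :
    2 * n₂ = n₁ + n₃ := by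
  by_contra hne
  have hπ : Real.pi ≠ 0 := Real.pi_ne_zero
  have hfR : (f : ℝ) ≠ 0 := Nat.cast_ne_zero.mpr hf.ne'
  have hfQ : (f : ℚ) ≠ 0 := Nat.cast_ne_zero.mpr hf.ne'
  have hkZ : ((n₁ : ℤ) + n₃ - 2 * n₂) ≠ 0 := by omega
  have hkR : ((n₁ : ℝ) + n₃ - 2 * n₂) ≠ 0 := by
    intro h
    apply hkZ
    have : (((n₁ : ℤ) + n₃ - 2 * n₂ : ℤ) : ℝ) = 0 := by push_cast; linarith
    exact_mod_cast this
  have hkQ : ((n₁ : ℚ) + n₃ - 2 * n₂) ≠ 0 := by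
    intro h; apply hkZ; exact_mod_cast h
  have hβ : β = 2 * Real.pi - 2 * α := by linarith
  have hγ : γ = α + 4 / (f : ℝ) * Real.pi - Real.pi := by
    have h : (1 + 4 / (f : ℝ)) * Real.pi = Real.pi + 4 / (f : ℝ) * Real.pi := by ring
    linarith
  have key : ((n₁ : ℝ) + n₃ - 2 * n₂) * α
      = (2 - 2 * (n₂ : ℝ) - (4 / (f : ℝ) - 1) * (n₃ : ℝ)) * Real.pi := by
    linear_combination hvertex - (n₂ : ℝ) * hβ - (n₃ : ℝ) * hγ
  set q : ℚ := (2 - 2 * (n₂ : ℚ) - (4 / (f : ℚ) - 1) * (n₃ : ℚ)) / ((n₁ : ℚ) + n₃ - 2 * n₂)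
    with hq
  have hα : α / Real.pi = (q : ℝ) := by
    rw [hq]
    push_cast
    rw [div_eq_div_iff hπ hkR]
    linear_combination key
  rcases hirr with h | h | h
  · rw [hα] at h
    exact (Rat.not_irrational q) h
  · have hb : β / Real.pi = ((2 - 2 * q : ℚ) : ℝ) := by
      push_cast
      rw [hβ, ← hα]
      field_simp
    rw [hb] at h
    exact (Rat.not_irrational _) h
  · have hg : γ / Real.pi = ((q + 4 / (f : ℚ) - 1 : ℚ) : ℝ) := by
      push_cast
      rw [hγ, ← hα]
      field_simp
    rw [hg] at h
    exact (Rat.not_irrational _) h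
end

section
/- Let A = (0, 0, 1), B = (√2/2, 0, √2/2), C = (−√2/2, √2/2, 0) in ℝ³ (EuclideanSpace ℝ (Fin 3)). Then A, B, C are unit vectors; the side lengths of the spherical triangle with vertices A, B, C are ∠(B,C) = 2π/3, ∠(A,C) = π/2, ∠(A,B) = π/4; and its corner angles are 3π/4 at A, arctan √2 at B, and π/2 − arctan √2 at C. -/
open scoped RealInnerProductSpace

lemma inner3 (x y : EuclideanSpace ℝ (Fin 3)) : ⟪x,y⟫ = x 0 * y 0 + x 1 * y 1 + x 2 * y 2 := by
  simp [PiLp.inner_apply, Fin.sum_univ_three, mul_comm]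

lemma norm3 (x : EuclideanSpace ℝ (Fin 3)) : ‖x‖ = Real.sqrt (x 0^2 + x 1^2 + x 2^2) := by
  simp [EuclideanSpace.norm_eq, Fin.sum_univ_three, Real.norm_eq_abs, sq_abs]

lemma angle_eq {x y : EuclideanSpace ℝ (Fin 3)} {θ : ℝ} (h0 : 0 ≤ θ) (h1 : θ ≤ Real.pi)
    (h : Real.cos θ = ⟪x,y⟫ / (‖x‖ * ‖y‖)) : InnerProductGeometry.angle x y = θ := by
  rw [InnerProductGeometry.angle, ← h, Real.arccos_cos h0 h1]

/-- Exact geometric data of the sporadic triangle monotile: angles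
`(3π/4, arctan √2, π/2 − arctan √2)` and sides `(2π/3, π/2, π/4)`. -/
theorem sporadic_triangle_data :
    let A : EuclideanSpace ℝ (Fin 3) := !₂[0, 0, 1]
    let B : EuclideanSpace ℝ (Fin 3) := !₂[Real.sqrt 2 / 2, 0, Real.sqrt 2 / 2]
    let C : EuclideanSpace ℝ (Fin 3) := !₂[-(Real.sqrt 2 / 2), Real.sqrt 2 / 2, 0]
    ‖A‖ = 1 ∧ ‖B‖ = 1 ∧ ‖C‖ = 1 ∧
    InnerProductGeometry.angle B C = 2 * Real.pi / 3 ∧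
    InnerProductGeometry.angle A C = Real.pi / 2 ∧
    InnerProductGeometry.angle A B = Real.pi / 4 ∧
    cornerAngle A B C = 3 * Real.pi / 4 ∧
    cornerAngle B A C = Real.arctan (Real.sqrt 2) ∧
    cornerAngle C A B = Real.pi / 2 - Real.arctan (Real.sqrt 2) := by
  intro A B C
  have pi_pos := Real.pi_pos
  have h2 : Real.sqrt 2 ^ 2 = 2 := Real.sq_sqrt (by norm_num)
  have h2' : (0:ℝ) < Real.sqrt 2 := Real.sqrt_pos.mpr (by norm_num)
  have hat : 0 ≤ Real.arctan (Real.sqrt 2) := by rw [← Real.arctan_zero]; exact Real.arctan_strictMono.monotone h2'.le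
  have hat2 : Real.arctan (Real.sqrt 2) < Real.pi / 2 := Real.arctan_lt_pi_div_two _
  have hA : ‖A‖ = 1 := by rw [norm3]; norm_num [A]; left; rfl
  have hB : ‖B‖ = 1 := by rw [norm3]; simp [B]; nlinarith
  have hC : ‖C‖ = 1 := by rw [norm3]; simp [C]; nlinarith
  have hBA : ⟪B, A⟫ = Real.sqrt 2 / 2 := by simp [inner3, Fin.sum_univ_three, A, B]
  have hCA : ⟪C, A⟫ = 0 := by simp [inner3, Fin.sum_univ_three, A, C]
  have hAB : ⟪A, B⟫ = Real.sqrt 2 / 2 := by simp [inner3, Fin.sum_univ_three, A, B]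
  have hCB : ⟪C, B⟫ = -(1/2) := by simp [inner3, Fin.sum_univ_three, B, C]; nlinarith
  have hAC : ⟪A, C⟫ = 0 := by simp [inner3, Fin.sum_univ_three, A, C]
  have hBC : ⟪B, C⟫ = -(1/2) := by simp [inner3, Fin.sum_univ_three, B, C]; nlinarith
  refine ⟨hA, hB, hC, ?_, ?_, ?_, ?_, ?_, ?_⟩
  · refine angle_eq (by positivity) (by linarith) ?_
    rw [hBC, hB, hC, show 2*Real.pi/3 = Real.pi - Real.pi/3 by ring, Real.cos_pi_sub,
      Real.cos_pi_div_three]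
    norm_num
  · refine angle_eq (by positivity) (by linarith) ?_
    rw [hAC, Real.cos_pi_div_two]; simp
  · refine angle_eq (by positivity) (by linarith) ?_
    rw [hAB, hA, hB, Real.cos_pi_div_four]; norm_num
  · rw [cornerAngle, hBA, hCA]
    have hu : B - (Real.sqrt 2 / 2) • A = (!₂[Real.sqrt 2 / 2, 0, 0] : EuclideanSpace ℝ (Fin 3)) := by
      ext i; fin_cases i <;> simp [A, B]
    have hv : C - (0:ℝ) • A = C := by simp
    rw [hu, hv]
    refine angle_eq (by positivity) (by linarith) ?_
    rw [inner3, norm3, hC, show 3*Real.pi/4 = Real.pi - Real.pi/4 by ring, Real.cos_pi_sub,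
      Real.cos_pi_div_four]
    simp [C]
    rw [Real.sqrt_sq (by positivity)]
    field_simp
  · rw [cornerAngle, hAB, hCB]
    have hu : A - (Real.sqrt 2 / 2) • B = (!₂[-(1/2), 0, 1/2] : EuclideanSpace ℝ (Fin 3)) := by
      ext i; fin_cases i <;> simp [A, B] <;> nlinarith
    have hv : C - (-(1/2) : ℝ) • B =
        (!₂[-(Real.sqrt 2/4), Real.sqrt 2/2, Real.sqrt 2/4] : EuclideanSpace ℝ (Fin 3)) := by
      ext i; fin_cases i <;> simp [B, C] <;> ring
    rw [hu, hv]
    refine angle_eq hat (by linarith) ?_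
    rw [Real.cos_arctan, inner3, norm3, norm3, h2, show (1:ℝ)+2 = 3 by norm_num]
    have h3 : Real.sqrt 3 ^ 2 = 3 := Real.sq_sqrt (by norm_num)
    have h3' : (0:ℝ) < Real.sqrt 3 := Real.sqrt_pos.mpr (by norm_num)
    simp only [Matrix.cons_val_zero, Matrix.cons_val_one, Matrix.head_cons,
      Matrix.cons_val_two, Matrix.tail_cons]
    rw [show ((-(1/2):ℝ))^2 + 0^2 + (1/2)^2 = (Real.sqrt 2/2)^2 by linear_combination (-1/4)*h2,
      show ((-(Real.sqrt 2/4)))^2 + (Real.sqrt 2/2)^2 + (Real.sqrt 2/4)^2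
        = (Real.sqrt 3/2)^2 by linear_combination (3/8)*h2 - h3/4,
      Real.sqrt_sq (by positivity), Real.sqrt_sq (by positivity)]
    field_simp
    ring
  · rw [cornerAngle, hAC, hBC]
    have hu : A - (0:ℝ) • C = A := by simp
    have hv : B - (-(1/2) : ℝ) • C =
        (!₂[Real.sqrt 2/4, Real.sqrt 2/4, Real.sqrt 2/2] : EuclideanSpace ℝ (Fin 3)) := by
      ext i; fin_cases i <;> simp [B, C] <;> ring
    rw [hu, hv]
    refine angle_eq (by linarith) (by linarith) ?_
    rw [Real.cos_pi_div_two_sub, Real.sin_arctan, inner3, norm3, norm3, h2, show (1:ℝ)+2 = 3 by norm_num]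
    have h3 : Real.sqrt 3 ^ 2 = 3 := Real.sq_sqrt (by norm_num)
    have h3' : (0:ℝ) < Real.sqrt 3 := Real.sqrt_pos.mpr (by norm_num)
    simp only [Matrix.cons_val_zero, Matrix.cons_val_one, Matrix.head_cons,
      Matrix.cons_val_two, Matrix.tail_cons]
    rw [show ((Real.sqrt 2/4):ℝ)^2 + (Real.sqrt 2/4)^2 + (Real.sqrt 2/2)^2
        = (Real.sqrt 3/2)^2 by linear_combination (3/8)*h2 - h3/4, Real.sqrt_sq (by positivity)]
    simp [A]
    field_simp
end
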